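/- Let K be a field of characteristic zero, V and W K-vector spaces, and B : V × V → W a symmetric bilinear map with associated linear map B̃ : V ⊗ V → W. Suppose V is the internal direct sum of finitely many subspaces V₁, …, V_m, that the family of subspaces B̃(image of V_i ⊗ V_j in V ⊗ V) of W, for 1 ≤ i ≤ j ≤ m, is linearly independent (their sum in W is direct), that for all i < j the restriction of B̃ to the image of V_i ⊗ V_j is injective, and that for each i the kernel of the restriction of B̃ to the image of V_i ⊗ V_i equals span{x⊗y − y⊗x : x, y ∈ V_i}. Then the kernel of B̃ equals span{x⊗y − y⊗x : x, y ∈ V}; equivalently, the induced map Sym²V → W on the symmetric square is injective. -/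

import Mathlib

open TensorProduct

/-- If a family of submodules is independent and a finite sum of elements, one
taken from each, is zero, then each element is zero. -/
lemma aux_indep_sum_eq_zero {K N : Type*} [Field K] [AddCommGroup N] [Module K N]
    {ι : Type*} [Fintype ι] (p : ι → Submodule K N) (h : iSupIndep p)
    (v : ι → N) (hv : ∀ i, v i ∈ p i) (hsum : ∑ i, v i = 0) : ∀ i, v i = 0 := by
  classical
  intro i
  have h1 : v i + ∑ j ∈ Finset.univ.erase i, v j = 0 := by
    rw [Finset.add_sum_erase Finset.univ v (Finset.mem_univ i)]; exact hsum
  have h2 : v i = -∑ j ∈ Finset.univ.erase i, v j := eq_neg_of_add_eq_zero_left h1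
  have h3 : v i ∈ ⨆ (j) (_ : j ≠ i), p j := by
    rw [h2]
    refine neg_mem (Submodule.sum_mem _ fun j hj => ?_)
    have hji : j ≠ i := (Finset.mem_erase.mp hj).1
    exact Submodule.mem_iSup_of_mem j (Submodule.mem_iSup_of_mem hji (hv j))
  exact (Submodule.disjoint_def.mp (h i)) (v i) (hv i) h3

/-- Abstract linear-algebra content of Lemma 4.6 of the paper: let
`B : V × V → W` be a symmetric bilinear map with associated linear map
`B̃ : V ⊗ V → W`.  Suppose `V` is the internal direct sum of subspaces
`V₁, …, V_m`, the subspaces `B̃(V_i ⊗ V_j)` of `W` for `i ≤ j` are independent,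
`B̃` is injective on the image of `V_i ⊗ V_j` for `i < j`, and for each `i` the
kernel of `B̃` on the image of `V_i ⊗ V_i` is spanned by the antisymmetric
tensors of elements of `V_i`.  Then `Ker B̃ = span{x⊗y − y⊗x : x, y ∈ V}`,
i.e. the induced map `Sym²V → W` is injective. -/
theorem stmt_9 (K V W : Type*) [Field K] [CharZero K]
    [AddCommGroup V] [Module K V] [AddCommGroup W] [Module K W]
    (m : ℕ) (Vsub : Fin m → Submodule K V)
    (B : V →ₗ[K] V →ₗ[K] W) (hsymm : ∀ x y : V, B x y = B y x)
    (hinternal : DirectSum.IsInternal Vsub)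
    (hindep : iSupIndep (fun p : {p : Fin m × Fin m // p.1 ≤ p.2} =>
      Submodule.map (TensorProduct.lift B)
        (Submodule.span K
          {t : V ⊗[K] V | ∃ x ∈ Vsub p.1.1, ∃ y ∈ Vsub p.1.2, t = x ⊗ₜ[K] y})))
    (hinj : ∀ i j : Fin m, i < j →
      (Submodule.span K {t : V ⊗[K] V | ∃ x ∈ Vsub i, ∃ y ∈ Vsub j, t = x ⊗ₜ[K] y}) ⊓
          LinearMap.ker (TensorProduct.lift B) = ⊥)
    (hker : ∀ i : Fin m,
      (Submodule.span K {t : V ⊗[K] V | ∃ x ∈ Vsub i, ∃ y ∈ Vsub i, t = x ⊗ₜ[K] y}) ⊓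
          LinearMap.ker (TensorProduct.lift B)
        = Submodule.span K
            {t : V ⊗[K] V | ∃ x ∈ Vsub i, ∃ y ∈ Vsub i, t = x ⊗ₜ[K] y - y ⊗ₜ[K] x}) :
    LinearMap.ker (TensorProduct.lift B)
      = Submodule.span K {t : V ⊗[K] V | ∃ x y : V, t = x ⊗ₜ[K] y - y ⊗ₜ[K] x} := by
  classical
  set f := TensorProduct.lift B with hf
  set A : Submodule K (V ⊗[K] V) :=
    Submodule.span K {t : V ⊗[K] V | ∃ x y : V, t = x ⊗ₜ[K] y - y ⊗ₜ[K] x} with hA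
  set S : {p : Fin m × Fin m // p.1 ≤ p.2} → Submodule K (V ⊗[K] V) := fun p =>
    Submodule.span K
      {t : V ⊗[K] V | ∃ x ∈ Vsub p.1.1, ∃ y ∈ Vsub p.1.2, t = x ⊗ₜ[K] y} with hS
  -- the easy inclusion: antisymmetric tensors are in the kernel
  have hAker : A ≤ LinearMap.ker f := by
    rw [hA, Submodule.span_le]
    rintro t ⟨x, y, rfl⟩
    simp [f, hsymm x y]
  -- the whole space is A ⊔ ⨆ S
  have hVtop : (⨆ i, Vsub i) = ⊤ := hinternal.submodule_iSup_eq_top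
  have key : ∀ x, x ∈ (⨆ i, Vsub i) → ∀ y, y ∈ (⨆ i, Vsub i) →
      x ⊗ₜ[K] y ∈ A ⊔ ⨆ p, S p := by
    intro x hx
    refine Submodule.iSup_induction' (p := Vsub)
      (motive := fun x _ => ∀ y, y ∈ (⨆ i, Vsub i) → x ⊗ₜ[K] y ∈ A ⊔ ⨆ p, S p)
      ?_ ?_ ?_ hx
    · intro i x hxi y hy
      refine Submodule.iSup_induction' (p := Vsub)
        (motive := fun y _ => x ⊗ₜ[K] y ∈ A ⊔ ⨆ p, S p) ?_ ?_ ?_ hy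
      · intro j y hyj
        rcases le_or_gt i j with hij | hji
        · refine Submodule.mem_sup_right (Submodule.mem_iSup_of_mem ⟨(i, j), hij⟩ ?_)
          exact Submodule.subset_span ⟨x, hxi, y, hyj, rfl⟩
        · have h1 : y ⊗ₜ[K] x ∈ ⨆ p, S p :=
            Submodule.mem_iSup_of_mem ⟨(j, i), le_of_lt hji⟩
              (Submodule.subset_span ⟨y, hyj, x, hxi, rfl⟩)
          have h2 : x ⊗ₜ[K] y - y ⊗ₜ[K] x ∈ A :=
            Submodule.subset_span ⟨x, y, rfl⟩
          have h3 : x ⊗ₜ[K] y = (x ⊗ₜ[K] y - y ⊗ₜ[K] x) + y ⊗ₜ[K] x := by abel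
          rw [h3]
          exact add_mem (Submodule.mem_sup_left h2) (Submodule.mem_sup_right h1)
      · show x ⊗ₜ[K] (0 : V) ∈ A ⊔ ⨆ p, S p
        rw [tmul_zero]; exact zero_mem _
      · intro a b _ _ ha hb
        show x ⊗ₜ[K] (a + b) ∈ A ⊔ ⨆ p, S p
        rw [tmul_add]; exact add_mem ha hb
    · intro y hy
      show (0 : V) ⊗ₜ[K] y ∈ A ⊔ ⨆ p, S p
      rw [zero_tmul]; exact zero_mem _
    · intro a b _ _ ha hb y hy
      show (a + b) ⊗ₜ[K] y ∈ A ⊔ ⨆ p, S p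
      rw [add_tmul]
      exact add_mem (ha y hy) (hb y hy)
  have htop : (⊤ : Submodule K (V ⊗[K] V)) ≤ A ⊔ ⨆ p, S p := by
    intro t _
    induction t using TensorProduct.induction_on with
    | zero => exact zero_mem _
    | add a b ha hb => exact add_mem (ha Submodule.mem_top) (hb Submodule.mem_top)
    | tmul x y =>
      exact key x (hVtop ▸ Submodule.mem_top) y (hVtop ▸ Submodule.mem_top)
  -- main proof
  apply le_antisymm _ hAker
  intro t ht
  have ht' : t ∈ A ⊔ ⨆ p, S p := htop Submodule.mem_top
  rw [Submodule.mem_sup] at ht'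
  obtain ⟨a, haA, s, hs, rfl⟩ := ht'
  have hsker : s ∈ LinearMap.ker f := by
    have haker : a ∈ LinearMap.ker f := hAker haA
    have : f a + f s = 0 := by rw [← map_add]; exact ht
    rw [LinearMap.mem_ker] at haker ⊢
    rw [haker, zero_add] at this
    exact this
  -- decompose s as a sum over the independent family
  rw [Submodule.mem_iSup_iff_exists_finsupp] at hs
  obtain ⟨v, hv, hvsum⟩ := hs
  have hvsum' : ∑ p, v p = s := by
    rw [← hvsum, Finsupp.sum_fintype]
    intro; rfl
  -- each image piece is zero
  have hzero : ∀ p, f (v p) = 0 := by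
    apply aux_indep_sum_eq_zero _ hindep (fun p => f (v p))
      (fun p => Submodule.mem_map_of_mem (hv p))
    rw [← map_sum, hvsum']
    exact hsker
  -- hence each piece is in A
  have hvA : ∀ p, v p ∈ A := by
    intro p
    obtain ⟨⟨i, j⟩, hij⟩ := p
    rcases lt_or_eq_of_le hij with hlt | heq
    · have : v ⟨(i, j), hij⟩ ∈ S ⟨(i, j), hij⟩ ⊓ LinearMap.ker f :=
        ⟨hv _, LinearMap.mem_ker.mpr (hzero _)⟩
      rw [hS] at this
      rw [hinj i j hlt] at this
      rw [this]
      exact zero_mem _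
    · have : v ⟨(i, j), hij⟩ ∈ S ⟨(i, j), hij⟩ ⊓ LinearMap.ker f :=
        ⟨hv _, LinearMap.mem_ker.mpr (hzero _)⟩
      obtain rfl : i = j := heq
      rw [hS] at this
      rw [hker i] at this
      refine Submodule.span_le.mpr ?_ this
      rintro u ⟨x, _, y, _, rfl⟩
      exact Submodule.subset_span ⟨x, y, rfl⟩
  have hsA : s ∈ A := by
    rw [← hvsum']
    exact Submodule.sum_mem _ fun p _ => hvA p
  exact add_mem haA hsA
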